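/- Let p be a positive integer and let L = PresentedGroup {c^p, z⁻¹ * c⁻¹ * z * c⁻¹} be the group presented on the two-element generating set {c, z} (e.g., c = FreeGroup.of true, z = FreeGroup.of false in FreeGroup Bool) with relators c^p and z⁻¹c⁻¹zc⁻¹. Let G = Multiplicative (ZMod p) (the cyclic group of order p), let A = B = ⊤ be the full subgroup of G, and let φ : A ≃* B be the isomorphism induced by inversion x ↦ x⁻¹. Then the HNN extension of G along φ (HNNExtension G ⊤ ⊤ φ) is isomorphic to L. -/

import Mathlib

private theorem zmod_addHom_ext {A : Type*} [AddGroup A] {n : ℕ} (f g : ZMod n →+ A)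
    (h : f 1 = g 1) : f = g := by
  have key : f.comp (Int.castAddHom (ZMod n)) = g.comp (Int.castAddHom (ZMod n)) :=
    AddMonoidHom.ext_int (by simpa using h)
  ext x
  have := DFunLike.congr_fun key (ZMod.cast x : ℤ)
  simpa [ZMod.intCast_zmod_cast] using this

private theorem zmod_monoidHom_ext {H : Type*} [Group H] {n : ℕ}
    (f g : Multiplicative (ZMod n) →* H)
    (h : f (Multiplicative.ofAdd 1) = g (Multiplicative.ofAdd 1)) : f = g := by
  have := zmod_addHom_ext (MonoidHom.toAdditiveRight f) (MonoidHom.toAdditiveRight g) h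
  exact MonoidHom.toAdditiveRight.injective this

/-- STATEMENT 14: For `p > 0`, the HNN extension of the cyclic group `C_p` (written
multiplicatively as `Multiplicative (ZMod p)`) along the inversion isomorphism `x ↦ x⁻¹`
(of the full subgroup `⊤`) is isomorphic to the group
`L = ⟨c, z | cᵖ, z⁻¹c⁻¹zc⁻¹⟩`, where `c = FreeGroup.of true`, `z = FreeGroup.of false`. -/
theorem hnn_cyclic_inv_iso_presented
    (p : ℕ) (hp : 0 < p)
    (φ : (⊤ : Subgroup (Multiplicative (ZMod p))) ≃*
      (⊤ : Subgroup (Multiplicative (ZMod p))))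
    (hφ : ∀ x : (⊤ : Subgroup (Multiplicative (ZMod p))),
      (φ x : Multiplicative (ZMod p)) = (x : Multiplicative (ZMod p))⁻¹) :
    Nonempty (HNNExtension (Multiplicative (ZMod p)) ⊤ ⊤ φ ≃*
      PresentedGroup
        ({FreeGroup.of true ^ p,
          (FreeGroup.of false)⁻¹ * (FreeGroup.of true)⁻¹ * FreeGroup.of false *
            (FreeGroup.of true)⁻¹} : Set (FreeGroup Bool))) := by
  set rels : Set (FreeGroup Bool) :=
    {FreeGroup.of true ^ p,
      (FreeGroup.of false)⁻¹ * (FreeGroup.of true)⁻¹ * FreeGroup.of false *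
        (FreeGroup.of true)⁻¹} with hrels
  set G := Multiplicative (ZMod p)
  set L := PresentedGroup rels
  set c : L := PresentedGroup.of true
  set z : L := PresentedGroup.of false
  set g : G := Multiplicative.ofAdd (1 : ZMod p) with hg
  -- relators hold in L
  have hrel : ∀ r ∈ rels, (QuotientGroup.mk r : L) = 1 := fun r hr =>
    (QuotientGroup.eq_one_iff r).2 (Subgroup.subset_normalClosure hr)
  have hc_p : c ^ p = 1 := by
    have := hrel _ (Set.mem_insert _ _)
    simp [c, PresentedGroup.of, QuotientGroup.mk_pow] at this
    exact this
  have hkey : z * c * z⁻¹ = c⁻¹ := by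
    have := hrel _ (Set.mem_insert_of_mem _ rfl)
    have h2 : z⁻¹ * c⁻¹ * z * c⁻¹ = 1 := by
      simp [c, z, PresentedGroup.of] at this
      exact this
    have h3 : z⁻¹ * c⁻¹ * z = c := by
      have h4 : (z⁻¹ * c⁻¹ * z * c⁻¹) * c = 1 * c := by rw [h2]
      simpa using h4
    calc z * c * z⁻¹ = z * (z⁻¹ * c⁻¹ * z) * z⁻¹ := by rw [h3]
    _ = c⁻¹ := by group
  -- the hom G →* L sending the generator to c
  have hcp' : (zmultiplesHom (Additive L) (Additive.ofMul c)) (p : ℤ) = 0 := by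
    have h5 : ((p : ℤ) • Additive.ofMul c) = Additive.ofMul (c ^ (p : ℤ)) :=
      (ofMul_zpow _ _).symm
    rw [zmultiplesHom_apply, h5, zpow_natCast, hc_p]; rfl
  set F : G →* L :=
    AddMonoidHom.toMultiplicativeLeft
      (ZMod.lift p ⟨zmultiplesHom (Additive L) (Additive.ofMul c), hcp'⟩) with hF
  have hF1 : F g = c := by
    have : ((1 : ℤ) : ZMod p) = (1 : ZMod p) := by norm_cast
    simp only [hF, hg, AddMonoidHom.toMultiplicativeLeft, MonoidHom.coe_mk, OneHom.coe_mk]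
    show Additive.toMul ((ZMod.lift p ⟨_, hcp'⟩) ((Multiplicative.ofAdd (1 : ZMod p)).toAdd)) = c
    rw [toAdd_ofAdd, ← this, ZMod.lift_coe]
    simp
  -- conjugation by z inverts the image of F
  have hconj : ∀ x : G, z * F x * z⁻¹ = F x⁻¹ := by
    have : ((MulAut.conj z).toMonoidHom.comp F) = F.comp (invMonoidHom) := by
      apply zmod_monoidHom_ext
      simp only [MonoidHom.comp_apply, MulEquiv.coe_toMonoidHom, MulAut.conj_apply,
        invMonoidHom_apply]
      rw [← hg, hF1, map_inv, hF1, hkey]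
    intro x
    have := DFunLike.congr_fun this x
    simpa using this
  have hx : ∀ a : (⊤ : Subgroup G), z * F ↑a = F (φ a : G) * z := by
    intro a
    rw [hφ a]
    have := hconj (a : G)
    calc z * F ↑a = (z * F ↑a * z⁻¹) * z := by group
    _ = F (↑a)⁻¹ * z := by rw [this]
  set Φ : HNNExtension G ⊤ ⊤ φ →* L := HNNExtension.lift F z hx with hΦ
  -- the reverse map
  set f : Bool → HNNExtension G ⊤ ⊤ φ := fun b => if b then HNNExtension.of g else HNNExtension.t
    with hf
  have hφsymm : ∀ a : (⊤ : Subgroup G), (φ.symm a : G) = (a : G)⁻¹ := by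
    intro a
    have : φ ⟨(a : G)⁻¹, Subgroup.mem_top _⟩ = a := by
      have h6 := hφ ⟨(a : G)⁻¹, Subgroup.mem_top _⟩
      apply Subtype.ext
      rw [h6, inv_inv]
    rw [← this, MulEquiv.symm_apply_apply, hφ, inv_inv]
  have hrel2 : ∀ r ∈ rels, FreeGroup.lift f r = 1 := by
    intro r hr
    rcases hr with h | h
    · subst h
      have e1 : FreeGroup.lift f (FreeGroup.of true) = HNNExtension.of g :=
        FreeGroup.lift_apply_of
      rw [map_pow, e1, ← map_pow]
      have : g ^ p = 1 := by
        rw [hg, ← ofAdd_nsmul, nsmul_eq_mul, mul_one, ZMod.natCast_self, ofAdd_zero]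
      rw [this, map_one]
    · simp only [Set.mem_singleton_iff] at h
      subst h
      have e1 : FreeGroup.lift f (FreeGroup.of true) = HNNExtension.of g :=
        FreeGroup.lift_apply_of
      have e2 : FreeGroup.lift f (FreeGroup.of false) = HNNExtension.t :=
        FreeGroup.lift_apply_of
      have h1 : HNNExtension.t⁻¹ * (HNNExtension.of (g⁻¹) : HNNExtension G ⊤ ⊤ φ) =
          HNNExtension.of (φ.symm ⟨g⁻¹, Subgroup.mem_top _⟩ : G) * HNNExtension.t⁻¹ :=
        HNNExtension.inv_t_mul_of (φ := φ) ⟨g⁻¹, Subgroup.mem_top _⟩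
      rw [hφsymm ⟨g⁻¹, Subgroup.mem_top _⟩] at h1
      simp only [Subgroup.coe_mk, inv_inv] at h1
      rw [map_inv] at h1
      rw [map_mul, map_mul, map_mul, map_inv, map_inv, e1, e2, h1]
      group
      have hgg : g⁻¹⁻¹ * g⁻¹ = 1 := by rw [inv_inv]; exact mul_inv_cancel g
      rw [zpow_neg_one, ← map_inv (HNNExtension.of (φ := φ)) g, ← map_mul (HNNExtension.of (φ := φ))]
      exact (congrArg (HNNExtension.of (φ := φ)) hgg).trans (map_one _)
  set Ψ : L →* HNNExtension G ⊤ ⊤ φ := PresentedGroup.toGroup hrel2 with hΨ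
  -- the composites are identities
  have hΨc : Ψ c = HNNExtension.of g := by
    show PresentedGroup.toGroup hrel2 (PresentedGroup.of true) = _
    rw [PresentedGroup.toGroup.of]; rfl
  have hΨz : Ψ z = HNNExtension.t := by
    show PresentedGroup.toGroup hrel2 (PresentedGroup.of false) = _
    rw [PresentedGroup.toGroup.of]; rfl
  have h1 : Ψ.comp Φ = MonoidHom.id _ := by
    apply HNNExtension.hom_ext
    · apply zmod_monoidHom_ext
      simp only [MonoidHom.comp_apply, MonoidHom.id_apply]
      rw [hΦ, ← hg, HNNExtension.lift_of, hF1, hΨc]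
    · simp only [MonoidHom.comp_apply, MonoidHom.id_apply]
      rw [hΦ, HNNExtension.lift_t, hΨz]
  have h2 : Φ.comp Ψ = MonoidHom.id _ := by
    apply PresentedGroup.ext
    intro x
    cases x
    · simp only [MonoidHom.comp_apply, MonoidHom.id_apply]
      rw [show PresentedGroup.of false = z from rfl, hΨz, hΦ, HNNExtension.lift_t]; rfl
    · simp only [MonoidHom.comp_apply, MonoidHom.id_apply]
      rw [show PresentedGroup.of true = c from rfl, hΨc, hΦ, HNNExtension.lift_of, hF1]; rfl
  exact ⟨MonoidHom.toMulEquiv Φ Ψ h1 h2⟩
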